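/- Let B be an n×n matrix over the field of Puiseux series with all entries nonzero, let O be the matrix of tropicalizations o_{ij} = T(b_{ij}), and let A be the matrix of principal coefficients of the entries of B. If the pseudo-determinant Δ_O(A) is nonzero, then det(B) is nonzero, its principal coefficient Pc(det B) equals Δ_O(A), and T(det B) equals the tropical determinant |O|_t. -/

import Mathlib

/-- Tropicalization map on the field of (generalized) Puiseux series
`HahnSeries ℝ ℂ`: `T x = - ord x`. -/
noncomputable def T (x : HahnSeries ℝ ℂ) : ℝ := -x.order

/-- Principal coefficient: the coefficient of the lowest-order term. -/
noncomputable def Pc (x : HahnSeries ℝ ℂ) : ℂ := x.coeff x.order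

/-- Tropical determinant of a real square matrix. -/
noncomputable def tropDet {n : ℕ} (O : Matrix (Fin n) (Fin n) ℝ) : ℝ :=
  Finset.univ.sup' Finset.univ_nonempty (fun σ : Equiv.Perm (Fin n) => ∑ i, O i (σ i))

/-- Pseudo-determinant of `A` with respect to the tropical matrix `O`. -/
noncomputable def pseudoDet {n : ℕ} {R : Type*} [CommRing R]
    (O : Matrix (Fin n) (Fin n) ℝ) (A : Matrix (Fin n) (Fin n) R) : R :=
  ∑ σ ∈ Finset.univ.filter
      (fun σ : Equiv.Perm (Fin n) => ∑ i, O i (σ i) = tropDet O),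
    (Equiv.Perm.sign σ : ℤ) • ∏ i, A i (σ i)

lemma prod_order_leading {ι : Type*} (s : Finset ι) (f : ι → HahnSeries ℝ ℂ)
    (hf : ∀ i ∈ s, f i ≠ 0) :
    (∏ i ∈ s, f i) ≠ 0 ∧ (∏ i ∈ s, f i).order = ∑ i ∈ s, (f i).order ∧
      (∏ i ∈ s, f i).leadingCoeff = ∏ i ∈ s, (f i).leadingCoeff := by
  classical
  induction s using Finset.induction with
  | empty => simp [HahnSeries.order_one, HahnSeries.leadingCoeff_one]
  | insert _ _ hx ih =>
    rename_i a s
    obtain ⟨h1, h2, h3⟩ := ih (fun i hi => hf i (Finset.mem_insert_of_mem hi))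
    have ha : f a ≠ 0 := hf a (Finset.mem_insert_self a s)
    have hne : f a * ∏ i ∈ s, f i ≠ 0 := mul_ne_zero ha h1
    rw [Finset.prod_insert hx, Finset.sum_insert hx,
      Finset.prod_insert (f := fun i => (f i).leadingCoeff) hx]
    refine ⟨hne, ?_, ?_⟩
    · rw [HahnSeries.order_mul ha h1, h2]
    · rw [HahnSeries.leadingCoeff_eq, HahnSeries.order_mul ha h1,
        HahnSeries.coeff_mul_order_add_order, h3]

theorem pseudoDet_det {n : ℕ} (B : Matrix (Fin n) (Fin n) (HahnSeries ℝ ℂ))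
    (hB : ∀ i j, B i j ≠ 0)
    (O : Matrix (Fin n) (Fin n) ℝ) (hO : ∀ i j, O i j = T (B i j))
    (A : Matrix (Fin n) (Fin n) ℂ) (hA : ∀ i j, A i j = Pc (B i j))
    (hΔ : pseudoDet O A ≠ 0) :
    B.det ≠ 0 ∧ Pc B.det = pseudoDet O A ∧ T B.det = tropDet O := by
  classical
  set m : ℝ := -tropDet O with hm
  set P : Equiv.Perm (Fin n) → HahnSeries ℝ ℂ := fun σ => ∏ i, B i (σ i) with hPdef
  have hP : ∀ σ, P σ ≠ 0 ∧ (P σ).order = ∑ i, (B i (σ i)).order ∧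
      (P σ).leadingCoeff = ∏ i, (B i (σ i)).leadingCoeff :=
    fun σ => prod_order_leading Finset.univ _ (fun i _ => hB i (σ i))
  have horder : ∀ σ, (P σ).order = -∑ i, O i (σ i) := by
    intro σ
    rw [(hP σ).2.1, ← Finset.sum_neg_distrib]
    exact Finset.sum_congr rfl fun i _ => by rw [hO]; simp [T]
  have hle : ∀ σ : Equiv.Perm (Fin n), ∑ i, O i (σ i) ≤ tropDet O :=
    fun σ => by
      rw [tropDet]
      exact Finset.le_sup' (fun σ : Equiv.Perm (Fin n) => ∑ i, O i (σ i)) (Finset.mem_univ σ)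
  have hdet : B.det = ∑ σ : Equiv.Perm (Fin n), (Equiv.Perm.sign σ : ℤ) • P σ := by
    rw [← Matrix.det_transpose B, Matrix.det_apply]
    exact Finset.sum_congr rfl fun σ _ => by
      simp [Units.smul_def, Matrix.transpose_apply, hPdef]
  have hsum : ∀ g : ℝ, (B.det).coeff g
      = ∑ σ : Equiv.Perm (Fin n), (Equiv.Perm.sign σ : ℤ) • (P σ).coeff g := by
    intro g
    rw [hdet]
    have := map_sum (HahnSeries.coeff.addMonoidHom (Γ := ℝ) (R := ℂ) g)
      (fun σ : Equiv.Perm (Fin n) => (Equiv.Perm.sign σ : ℤ) • P σ) Finset.univ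
    simp only [map_zsmul] at this
    exact this
  have hcm : (B.det).coeff m = pseudoDet O A := by
    rw [hsum m, pseudoDet, Finset.sum_filter]
    refine Finset.sum_congr rfl fun σ _ => ?_
    by_cases h : ∑ i, O i (σ i) = tropDet O
    · rw [if_pos h]
      have ho : (P σ).order = m := by rw [horder, h]
      have : (P σ).coeff m = (P σ).leadingCoeff := by
        rw [HahnSeries.leadingCoeff_eq, ho]
      rw [this, (hP σ).2.2]
      congr 1
      exact Finset.prod_congr rfl fun i _ => by rw [hA, Pc, HahnSeries.leadingCoeff_eq]
    · rw [if_neg h]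
      have : m < (P σ).order := by
        rw [horder, hm]
        have := lt_of_le_of_ne (hle σ) h
        linarith
      rw [HahnSeries.coeff_eq_zero_of_lt_order this, smul_zero]
  have hlow : ∀ g : ℝ, g < m → (B.det).coeff g = 0 := by
    intro g hg
    rw [hsum g]
    refine Finset.sum_eq_zero fun σ _ => ?_
    have : g < (P σ).order := by
      rw [horder]
      have := hle σ
      rw [hm] at hg; linarith
    rw [HahnSeries.coeff_eq_zero_of_lt_order this, smul_zero]
  have hne : B.det ≠ 0 := fun h => hΔ (by rw [← hcm, h, HahnSeries.coeff_zero])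
  have hord : B.det.order = m := by
    rcases lt_trichotomy B.det.order m with h | h | h
    · exact absurd (hlow _ h) (by rw [← HahnSeries.leadingCoeff_eq]; exact HahnSeries.leadingCoeff_ne_zero.mpr hne)
    · exact h
    · exact absurd (HahnSeries.order_le_of_coeff_ne_zero (fun hc => hΔ (hcm ▸ hc))) (not_le.mpr h)
  refine ⟨hne, ?_, ?_⟩
  · rw [Pc, hord, hcm]
  · rw [T, hord, hm, neg_neg]
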